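/- Let R be an integral domain and let u, v ∈ R[X] be nonzero polynomials. Then the resultant of X·u and v equals, up to sign, the product of the constant coefficient of v with the resultant of u and v: resultant (X * u) v = (v.coeff 0) * resultant u v, or resultant (X * u) v = −((v.coeff 0) * resultant u v). -/

import Mathlib

open Polynomial

/-- The Sylvester matrix of two polynomials `f` and `g`: a square matrix of size
`natDegree f + natDegree g` whose first `natDegree g` rows are shifted coefficient
vectors of `f` and whose remaining `natDegree f` rows are shifted coefficient
vectors of `g`. -/
noncomputable def sylvesterMatrix {R : Type*} [CommRing R] (f g : R[X]) :
    Matrix (Fin (f.natDegree + g.natDegree)) (Fin (f.natDegree + g.natDegree)) R :=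
  Matrix.of fun i j =>
    if (i : ℕ) < g.natDegree then
      (if (i : ℕ) ≤ (j : ℕ) then f.coeff ((j : ℕ) - (i : ℕ)) else 0)
    else
      (if (i : ℕ) - g.natDegree ≤ (j : ℕ) then
        g.coeff ((j : ℕ) - ((i : ℕ) - g.natDegree)) else 0)

/-- The resultant of two polynomials: the determinant of their Sylvester matrix. -/
noncomputable def sylvResultant {R : Type*} [CommRing R] (f g : R[X]) : R :=
  (sylvesterMatrix f g).det

/-- Up to sign, the resultant of `X * u` and `v` is the constant coefficient of `v`
times the resultant of `u` and `v`. -/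
theorem resultant_X_mul {R : Type*} [CommRing R] [IsDomain R] (u v : R[X])
    (hu : u ≠ 0) (hv : v ≠ 0) :
    sylvResultant (X * u) v = v.coeff 0 * sylvResultant u v ∨
    sylvResultant (X * u) v = -(v.coeff 0 * sylvResultant u v) := by
  have hdeg : (X * u).natDegree = u.natDegree + 1 := by
    rw [natDegree_mul X_ne_zero hu, natDegree_X]; omega
  set m := u.natDegree with hm
  set n := v.natDegree with hn
  have e : (X * u).natDegree + v.natDegree = m + n + 1 := by omega
  set M : Matrix (Fin (m+n+1)) (Fin (m+n+1)) R :=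
    (sylvesterMatrix (X*u) v).submatrix (Fin.cast e.symm) (Fin.cast e.symm) with hM
  have hres : sylvResultant (X*u) v = M.det :=
    (Matrix.det_submatrix_equiv_self (finCongr e.symm) _).symm
  have hMe : ∀ i j : Fin (m+n+1), M i j =
      if (i : ℕ) < n then
        (if (i : ℕ) ≤ (j : ℕ) then (X*u).coeff ((j : ℕ) - (i : ℕ)) else 0)
      else
        (if (i : ℕ) - n ≤ (j : ℕ) then
          v.coeff ((j : ℕ) - ((i : ℕ) - n)) else 0) := by
    intro i j
    simp only [hM, Matrix.submatrix_apply, sylvesterMatrix, Matrix.of_apply, Fin.coe_cast, ← hn]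
  have i0 : Fin (m+n+1) := ⟨n, by omega⟩
  rw [Matrix.det_succ_column_zero] at hres
  have hc0 : (X * u).coeff 0 = 0 := by simp
  -- the sum collapses
  rw [Finset.sum_eq_single (⟨n, by omega⟩ : Fin (m+n+1))] at hres
  · -- main term
    have hminor : M.submatrix (Fin.succAbove ⟨n, by omega⟩) Fin.succ = sylvesterMatrix u v := by
      ext r c
      have hr : ((Fin.succAbove (⟨n, by omega⟩ : Fin (m+n+1)) r : Fin (m+n+1)) : ℕ)
          = if (r : ℕ) < n then (r : ℕ) else (r : ℕ) + 1 := by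
        rw [Fin.succAbove]
        split_ifs with h1 h2 h3
        · simp
        · exact absurd (by simpa [Fin.lt_def] using h1) h2
        · exact absurd (by simpa [Fin.lt_def] using h3) h1
        · simp
      rw [Matrix.submatrix_apply, hMe]
      simp only [hr, Fin.val_succ, sylvesterMatrix, Matrix.of_apply, ← hn]
      by_cases h : (r : ℕ) < n
      · simp only [h, if_true, if_pos h]
        by_cases h2 : (r : ℕ) ≤ (c : ℕ)
        · have h3 : (r : ℕ) ≤ (c : ℕ) + 1 := by omega
          have h4 : (c : ℕ) + 1 - (r : ℕ) = ((c : ℕ) - (r : ℕ)) + 1 := by omega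
          rw [if_pos h3, if_pos h2, h4, coeff_X_mul]
        · rw [if_neg h2]
          by_cases h3 : (r : ℕ) ≤ (c : ℕ) + 1
          · have h4 : (c : ℕ) + 1 - (r : ℕ) = 0 := by omega
            rw [if_pos h3, h4, hc0]
          · rw [if_neg h3]
      · simp only [h, if_false]
        have h1 : ¬ ((r : ℕ) + 1 < n) := by omega
        rw [if_neg h1]
        have h2 : (r : ℕ) + 1 - n = ((r : ℕ) - n) + 1 := by omega
        rw [h2]
        by_cases h3 : (r : ℕ) - n ≤ (c : ℕ)
        · have h4 : ((r : ℕ) - n) + 1 ≤ (c : ℕ) + 1 := by omega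
          rw [if_pos h3, if_pos h4]
          congr 1
          omega
        · have h4 : ¬ (((r : ℕ) - n) + 1 ≤ (c : ℕ) + 1) := by omega
          rw [if_neg h3, if_neg h4]
    have hM0 : M ⟨n, by omega⟩ (0 : Fin (m+n+1)) = v.coeff 0 := by
      rw [hMe]; simp
    rw [hminor, hM0] at hres
    rcases Nat.even_or_odd n with hp | hp
    · left
      rw [hres, hp.neg_one_pow]
      simp only [sylvResultant]; ring
    · right
      rw [hres, hp.neg_one_pow]
      simp only [sylvResultant]; ring
  · intro b _ hb
    have hb0 : M b (0 : Fin (m+n+1)) = 0 := by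
      rw [hMe]
      have hbn : (b : ℕ) ≠ n := fun h => hb (Fin.ext h)
      simp only [Fin.val_zero]
      split_ifs with h1 h2 h3
      · have : (b : ℕ) = 0 := by omega
        rw [this, Nat.sub_zero]; exact hc0
      · simp [h2]
      · have : (b : ℕ) = n := by omega
        exact absurd this hbn
      · simp [h3]
    rw [hb0]; ring
  · intro h
    exact absurd (Finset.mem_univ _) h
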